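/- There exists a commutative cellular algebra over ℤ that is not cyclic cellular. Specifically, let Γ = {1, 2} with 2 > 1, T(1) = {1}, T(2) = {1, 2}, and let A be the free ℤ-module with basis {1 = c¹₁₁} ∪ {c²_{s,t} : 1 ≤ s, t ≤ 2}, with (c^γ_{s,t})* = c^γ_{t,s}, 1 acting as identity, and all other products of basis elements equal to zero. Then A is a commutative cellular algebra that is not cyclic cellular. -/

import Mathlib

open scoped TensorProduct

/-- A cell datum (Graham–Lehrer cellular basis, in the weak form of Definition 2.1):
an `R`-linear algebra involution `star`, a poset `Γ`, finite index sets `T γ`, and a basis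
`c γ s t` satisfying the cellular multiplication rule (modulo the span `Ā^γ` of the basis
elements `c μ u w` with `μ > γ`) and the cellular involution rule. -/
structure CellDatum (R : Type*) [CommRing R] (A : Type*) [Ring A] [Algebra R A]
    (Γ : Type*) [PartialOrder Γ] (T : Γ → Type*) [∀ γ, Fintype (T γ)] where
  star : A →ₗ[R] A
  star_mul : ∀ a b : A, star (a * b) = star b * star a
  star_star : ∀ a : A, star (star a) = a
  c : (γ : Γ) → T γ → T γ → A
  indep : LinearIndependent R fun p : Σ γ : Γ, T γ × T γ => c p.1 p.2.1 p.2.2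
  span_top : Submodule.span R (Set.range fun p : Σ γ : Γ, T γ × T γ => c p.1 p.2.1 p.2.2) = ⊤
  mult : ∀ (γ : Γ) (s : T γ) (a : A), ∃ r : T γ → R, ∀ t : T γ,
    a * c γ s t - ∑ v : T γ, r v • c γ v t ∈
      Submodule.span R {x : A | ∃ μ : Γ, γ < μ ∧ ∃ u w : T μ, x = c μ u w}
  star_c : ∀ (γ : Γ) (s t : T γ),
    star (c γ s t) - c γ t s ∈
      Submodule.span R {x : A | ∃ μ : Γ, γ < μ ∧ ∃ u w : T μ, x = c μ u w}

namespace CellDatum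

variable {R : Type*} [CommRing R] {A : Type*} [Ring A] [Algebra R A]
  {Γ : Type*} [PartialOrder Γ] {T : Γ → Type*} [∀ γ, Fintype (T γ)]

/-- The ideal `Ā^γ`, spanned by the basis elements `c μ u w` with `μ > γ`. -/
def Abar (D : CellDatum R A Γ T) (γ : Γ) : Submodule R A :=
  Submodule.span R {x : A | ∃ μ : Γ, γ < μ ∧ ∃ u w : T μ, x = D.c μ u w}

/-- The ideal `A^γ`, spanned by the basis elements `c μ u w` with `μ ≥ γ`. -/
def Aup (D : CellDatum R A Γ T) (γ : Γ) : Submodule R A :=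
  Submodule.span R {x : A | ∃ μ : Γ, γ ≤ μ ∧ ∃ u w : T μ, x = D.c μ u w}

end CellDatum

/-- `e : T γ → M` exhibits the `A`-module `M` as (a copy of) the cell module `Δ^γ`:
`e` is an `R`-basis of `M`, and `A` acts on it by the structure coefficients of the cellular
basis. -/
def IsCellModule {R : Type*} [CommRing R] {A : Type*} [Ring A] [Algebra R A]
    {Γ : Type*} [PartialOrder Γ] {T : Γ → Type*} [∀ γ, Fintype (T γ)]
    (D : CellDatum R A Γ T) (γ : Γ) (M : Type*) [AddCommGroup M] [Module R M]
    [Module A M] [IsScalarTower R A M] (e : T γ → M) : Prop :=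
  LinearIndependent R e ∧ Submodule.span R (Set.range e) = ⊤ ∧
    ∀ (a : A) (s : T γ) (r : T γ → R),
      (∀ t : T γ, a * D.c γ s t - ∑ v : T γ, r v • D.c γ v t ∈ D.Abar γ) →
      a • e s = ∑ v : T γ, r v • e v

instance (b : Bool) : Fintype (cond b (Fin 2) PUnit) := by
  cases b
  · exact inferInstanceAs (Fintype PUnit)
  · exact inferInstanceAs (Fintype (Fin 2))


open TrivSqZeroExt

namespace Stmt6Aux

abbrev V := Fin 2 × Fin 2 → ℤ
abbrev AA := TrivSqZeroExt ℤ V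

def cc : (γ : Bool) → (cond γ (Fin 2) PUnit) → (cond γ (Fin 2) PUnit) → AA
  | false, _, _ => 1
  | true, s, t => inr (Pi.single (s, t) 1)

def idxEquiv : (Σ γ : Bool, (cond γ (Fin 2) PUnit) × (cond γ (Fin 2) PUnit)) ≃
    (Unit ⊕ (Fin 2 × Fin 2)) where
  toFun p := match p with
    | ⟨false, _⟩ => Sum.inl ()
    | ⟨true, p⟩ => Sum.inr p
  invFun x := match x with
    | Sum.inl _ => ⟨false, (PUnit.unit, PUnit.unit)⟩
    | Sum.inr p => ⟨true, p⟩
  left_inv p := by rcases p with ⟨(_|_), ⟨s, t⟩⟩ <;> rfl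
  right_inv x := by rcases x with _ | _ <;> rfl

noncomputable def bigB : Module.Basis (Unit ⊕ (Fin 2 × Fin 2)) ℤ (ℤ × V) :=
  (Module.Basis.singleton Unit ℤ).prod (Pi.basisFun ℤ (Fin 2 × Fin 2))

lemma bigB_inl : bigB (Sum.inl ()) = (1 : AA) := by
  have h1 : (bigB (Sum.inl ())).1 = 1 := by simp [bigB]
  have h2 : (bigB (Sum.inl ())).2 = 0 := by simp [bigB]
  exact TrivSqZeroExt.ext h1 h2

lemma bigB_inr (p : Fin 2 × Fin 2) : bigB (Sum.inr p) = (inr (Pi.single p 1) : AA) := by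
  have h1 : (bigB (Sum.inr p)).1 = 0 := by simp [bigB]
  have h2 : (bigB (Sum.inr p)).2 = Pi.single p 1 := by simp [bigB]
  exact TrivSqZeroExt.ext h1 h2

noncomputable def myBasis :
    Module.Basis (Σ γ : Bool, (cond γ (Fin 2) PUnit) × (cond γ (Fin 2) PUnit)) ℤ AA :=
  (bigB.reindex idxEquiv.symm : Module.Basis _ ℤ (ℤ × V))

lemma cc_eq_myBasis :
    (fun p : Σ γ : Bool, (cond γ (Fin 2) PUnit) × (cond γ (Fin 2) PUnit) =>
      cc p.1 p.2.1 p.2.2) = myBasis := by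
  funext p
  have := Module.Basis.reindex_apply bigB idxEquiv.symm p
  rcases p with ⟨(_|_), ⟨s, t⟩⟩
  · exact (this.trans bigB_inl).symm
  · exact (this.trans (bigB_inr (s, t))).symm

end Stmt6Aux

namespace Stmt6Aux

def starMap : AA →ₗ[ℤ] AA :=
  (LinearMap.prodMap LinearMap.id (LinearMap.funLeft ℤ ℤ Prod.swap) : (ℤ × V) →ₗ[ℤ] (ℤ × V))

lemma starMap_fst (a : AA) : (starMap a).fst = a.fst := rfl
lemma starMap_snd (a : AA) : (starMap a).snd = a.snd ∘ Prod.swap := rfl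

lemma starMap_mul (a b : AA) : starMap (a * b) = starMap b * starMap a := by
  apply TrivSqZeroExt.ext
  · show (a * b).fst = (starMap b * starMap a).fst
    rw [TrivSqZeroExt.fst_mul, TrivSqZeroExt.fst_mul, starMap_fst, starMap_fst, mul_comm]
  · show (a * b).snd ∘ Prod.swap = (starMap b * starMap a).snd
    rw [TrivSqZeroExt.snd_mul, TrivSqZeroExt.snd_mul, starMap_fst, starMap_fst,
      starMap_snd, starMap_snd]
    funext x
    simp [op_smul_eq_smul, mul_comm, add_comm]

lemma starMap_starMap (a : AA) : starMap (starMap a) = a := by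
  apply TrivSqZeroExt.ext
  · rfl
  · rw [starMap_snd, starMap_snd]; funext x; simp

lemma starMap_cc : ∀ (γ : Bool) (s t : cond γ (Fin 2) PUnit),
    starMap (cc γ s t) = cc γ t s := by
  intro γ s t
  cases γ
  · apply TrivSqZeroExt.ext
    · rfl
    · rfl
  · apply TrivSqZeroExt.ext
    · rfl
    · rw [show cc true s t = (inr (Pi.single (s, t) 1) : AA) from rfl, starMap_snd]
      funext x
      simp only [TrivSqZeroExt.snd_inr, Function.comp_apply, Pi.single_apply,
        Prod.ext_iff, Prod.fst_swap, Prod.snd_swap, cc]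
      rw [if_congr and_comm rfl rfl]

end Stmt6Aux

namespace Stmt6Aux

instance (b : Bool) : DecidableEq (cond b (Fin 2) PUnit) := by
  cases b
  · exact inferInstanceAs (DecidableEq PUnit)
  · exact inferInstanceAs (DecidableEq (Fin 2))

lemma mul_inr (a : AA) (x : V) : a * inr x = inr (a.fst • x) := by
  apply TrivSqZeroExt.ext
  · simp [TrivSqZeroExt.fst_mul]
  · simp [TrivSqZeroExt.snd_mul]

lemma abar_true :
    Submodule.span ℤ {x : AA | ∃ μ : Bool, true < μ ∧
      ∃ u w : cond μ (Fin 2) PUnit, x = cc μ u w} = ⊥ := by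
  convert Submodule.span_empty
  rw [Set.eq_empty_iff_forall_notMem]
  rintro x ⟨μ, hμ, -⟩
  exact absurd hμ (by simp [Bool.lt_iff] at *)

lemma sum_single_smul (x : V) : (∑ p : Fin 2 × Fin 2, x p • Pi.single p 1) = x := by
  simp only [← Pi.single_smul, smul_eq_mul, mul_one, Finset.univ_sum_single]

lemma inr_eq_sum (x : V) :
    (inr x : AA) = ∑ p : Fin 2 × Fin 2, x p • (inr (Pi.single p 1) : AA) :=
  calc (inr x : AA) = TrivSqZeroExt.inrHom ℤ V x := rfl
    _ = TrivSqZeroExt.inrHom ℤ V (∑ p : Fin 2 × Fin 2, x p • Pi.single p 1) := by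
        rw [sum_single_smul]
    _ = ∑ p : Fin 2 × Fin 2, x p • (inr (Pi.single p 1) : AA) := by
        rw [map_sum]
        exact Finset.sum_congr rfl fun p _ => by rw [map_smul]; rfl

lemma mem_span_high (x : V) :
    (inr x : AA) ∈ Submodule.span ℤ {y : AA | ∃ μ : Bool, false < μ ∧
      ∃ u w : cond μ (Fin 2) PUnit, y = cc μ u w} := by
  rw [inr_eq_sum]
  refine Submodule.sum_mem _ fun p _ => Submodule.smul_mem _ _ (Submodule.subset_span ?_)
  exact ⟨true, Bool.false_lt_true, p.1, p.2, by cases p; rfl⟩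

lemma mult_cc : ∀ (γ : Bool) (s : cond γ (Fin 2) PUnit) (a : AA),
    ∃ r : cond γ (Fin 2) PUnit → ℤ, ∀ t : cond γ (Fin 2) PUnit,
      a * cc γ s t - ∑ v : cond γ (Fin 2) PUnit, r v • cc γ v t ∈
        Submodule.span ℤ {x : AA | ∃ μ : Bool, γ < μ ∧
          ∃ u w : cond μ (Fin 2) PUnit, x = cc μ u w} := by
  intro γ
  cases γ
  · intro s a
    refine ⟨fun _ => a.fst, fun t => ?_⟩
    have h1 : a * cc false s t = a := mul_one a
    have h2 : (∑ v : cond false (Fin 2) PUnit, a.fst • cc false v t)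
        = TrivSqZeroExt.inl a.fst := by
      haveI : Unique (cond false (Fin 2) PUnit) := inferInstanceAs (Unique PUnit)
      rw [Fintype.sum_unique]
      show a.fst • (1 : AA) = _
      apply TrivSqZeroExt.ext <;> simp
    have h3 : a - TrivSqZeroExt.inl a.fst = inr a.snd := by
      apply TrivSqZeroExt.ext <;> simp
    rw [h1, h2, h3]
    exact mem_span_high a.snd
  · intro s a
    refine ⟨fun v => if v = s then a.fst else 0, fun t => ?_⟩
    have h1 : a * cc true s t = inr (a.fst • Pi.single (s, t) 1) := mul_inr _ _
    have h2 : (∑ v : cond true (Fin 2) PUnit, (if v = s then a.fst else 0) • cc true v t)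
        = inr (a.fst • Pi.single (s, t) 1) := by
      simp only [ite_smul, zero_smul]
      rw [Finset.sum_ite_eq' Finset.univ s (fun v => a.fst • cc true v t)]
      simp only [Finset.mem_univ, if_true]
      show a.fst • (inr (Pi.single (s, t) 1) : AA) = _
      rw [TrivSqZeroExt.inr_smul]
    rw [h1, h2, sub_self]
    exact Submodule.zero_mem _

end Stmt6Aux



namespace Stmt6Aux

noncomputable def D : CellDatum ℤ AA Bool (fun b => cond b (Fin 2) PUnit) where
  star := starMap
  star_mul := starMap_mul
  star_star := starMap_starMap
  c := cc
  indep := by rw [cc_eq_myBasis]; exact myBasis.linearIndependent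
  span_top := by rw [cc_eq_myBasis]; exact myBasis.span_eq
  mult := mult_cc
  star_c := fun γ s t => by rw [starMap_cc, sub_self]; exact Submodule.zero_mem _

def fstRingHom : AA →+* ℤ where
  toFun := TrivSqZeroExt.fst
  map_one' := rfl
  map_mul' _ _ := rfl
  map_zero' := rfl
  map_add' _ _ := rfl

abbrev MM := Fin 2 → ℤ

def modAM : Module AA MM := Module.compHom MM fstRingHom

lemma modAM_smul_def (a : AA) (m : MM) : (modAM.toSMul.smul a m) = a.fst • m := rfl

def towerM : @IsScalarTower ℤ AA MM _ modAM.toSMul _ := by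
  letI := modAM
  constructor
  intro z a m
  show ((z • a).fst) • m = z • (a.fst • m)
  rw [TrivSqZeroExt.fst_smul, smul_eq_mul, mul_smul]

lemma D_abar_true : D.Abar true = ⊥ := abar_true

lemma eval_eq (a : AA) (s : Fin 2) (r : Fin 2 → ℤ)
    (h : ∀ t : Fin 2, a * cc true s t = ∑ v : Fin 2, r v • cc true v t) :
    ∀ v : Fin 2, r v = if v = s then a.fst else 0 := by
  intro v
  have h0 := h 0
  have hs := congrArg TrivSqZeroExt.snd h0
  have h1 : (a * cc true s ((0 : Fin 2))).snd = a.fst • Pi.single (s, (0 : Fin 2)) 1 := by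
    rw [show cc true s ((0 : Fin 2)) = (inr (Pi.single (s, (0:Fin 2)) 1) : AA) from rfl, mul_inr,
      TrivSqZeroExt.snd_inr]
  have h2 : (∑ u : Fin 2, r u • cc true u ((0 : Fin 2))).snd
      = ∑ u : Fin 2, r u • Pi.single (u, (0 : Fin 2)) 1 := by
    rw [show (∑ u : Fin 2, r u • cc true u ((0 : Fin 2))).snd
      = TrivSqZeroExt.sndHom ℤ V (∑ u : Fin 2, r u • cc true u ((0 : Fin 2))) from rfl, map_sum]
    exact Finset.sum_congr rfl fun u _ => by rw [map_smul]; rfl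
  rw [h1, h2] at hs
  have := congrFun hs (v, 0)
  simp only [Pi.smul_apply, Pi.single_apply, Finset.sum_apply, Prod.mk.injEq,
    smul_eq_mul, and_true] at this
  simp only [mul_ite, mul_one, mul_zero, Finset.sum_ite_eq, Finset.mem_univ,
    if_true] at this
  exact this.symm

end Stmt6Aux


/-- The data of the example: a commutative cellular algebra over `ℤ` with poset
`Γ = {1, 2}` (`2 > 1`, modelled by `Bool` with `false < true`), `T 1 = {1}`,
`T 2 = {1, 2}`, basis `{1 = c¹₁₁} ∪ {c²ₛₜ}`, `(c^γ_{s,t})* = c^γ_{t,s}`, `1` acting as the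
identity, all other products of basis elements zero — which is not cyclic cellular (the cell
module at the top element is not cyclic). -/
structure BadExample where
  A : Type
  [instCR : CommRing A]
  D : CellDatum ℤ A Bool (fun b => cond b (Fin 2) PUnit)
  c_bot : D.c false PUnit.unit PUnit.unit = 1
  star_eq : ∀ (γ : Bool) (s t : cond γ (Fin 2) PUnit), D.star (D.c γ s t) = D.c γ t s
  prod_zero : ∀ s t u v : Fin 2, D.c true s t * D.c true u v = 0
  M : Type
  [iM1 : AddCommGroup M]
  [iM3 : Module A M]
  [iM4 : IsScalarTower ℤ A M]
  e : Fin 2 → M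
  cell : IsCellModule D true M e
  notcyclic : ∀ m : M, Submodule.span A {m} ≠ ⊤


namespace Stmt6Aux

noncomputable def ee : Fin 2 → MM := fun i => Pi.single i 1

lemma basisFun_eq : ⇑(Pi.basisFun ℤ (Fin 2)) = ee :=
  funext fun i => Pi.basisFun_apply ℤ (Fin 2) i

lemma cellM : letI := modAM; letI := towerM;
    IsCellModule D true MM ee := by
  letI := modAM; letI := towerM
  refine ⟨?_, ?_, ?_⟩
  · rw [← basisFun_eq]; exact (Pi.basisFun ℤ (Fin 2)).linearIndependent
  · rw [← basisFun_eq]; exact (Pi.basisFun ℤ (Fin 2)).span_eq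
  · intro a s r hr
    have hrv : ∀ v : Fin 2, r v = if v = s then a.fst else 0 :=
      eval_eq a s r fun t => sub_eq_zero.mp (by
        have := hr t
        rwa [D_abar_true, Submodule.mem_bot] at this)
    show a.fst • ee s = ∑ v : Fin 2, r v • ee v
    rw [Finset.sum_congr rfl fun v _ => by rw [hrv v]]
    simp [ite_smul, Finset.sum_ite_eq', ee]

lemma notcyc : letI := modAM;
    ∀ m : MM, Submodule.span AA {m} ≠ ⊤ := by
  letI := modAM
  intro m hm
  have h0 : (Pi.single 0 1 : MM) ∈ Submodule.span AA {m} := hm ▸ Submodule.mem_top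
  have h1 : (Pi.single 1 1 : MM) ∈ Submodule.span AA {m} := hm ▸ Submodule.mem_top
  rw [Submodule.mem_span_singleton] at h0 h1
  obtain ⟨a, ha⟩ := h0
  obtain ⟨b, hb⟩ := h1
  have ha0 : a.fst * m 0 = 1 := by
    have := congrFun (show a.fst • m = Pi.single 0 1 from ha) 0
    simpa using this
  have ha1 : a.fst * m 1 = 0 := by
    have := congrFun (show a.fst • m = Pi.single 0 1 from ha) 1
    simpa using this
  have hb1 : b.fst * m 1 = 1 := by
    have := congrFun (show b.fst • m = Pi.single 1 1 from hb) 1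
    simpa using this
  have hm1 : m 1 = 0 :=
    (mul_eq_zero.mp ha1).resolve_left (left_ne_zero_of_mul_eq_one ha0)
  rw [hm1, mul_zero] at hb1
  exact zero_ne_one hb1

end Stmt6Aux


/-- There exists a commutative (abelian) cellular algebra over `ℤ` that is
not cyclic cellular, namely the one described in `BadExample`. -/
theorem stmt_6 : Nonempty BadExample := by
  exact ⟨{ A := Stmt6Aux.AA
           instCR := inferInstance
           D := Stmt6Aux.D
           c_bot := rfl
           star_eq := Stmt6Aux.starMap_cc
           prod_zero := fun s t u v => TrivSqZeroExt.inr_mul_inr ℤ _ _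
           M := Stmt6Aux.MM
           iM1 := inferInstance
           iM3 := Stmt6Aux.modAM
           iM4 := Stmt6Aux.towerM
           e := Stmt6Aux.ee
           cell := Stmt6Aux.cellM
           notcyclic := Stmt6Aux.notcyc }⟩
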